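/- Let λ be the enumeration of Λ^m. If t ≥ q^⌊m/2⌋ − 1, then λ(t) = c_m + t − q^⌊m/2⌋ + 1, where c_m = q^m − q^⌊(m+1)/2⌋. -/
import Mathlib


/-- The Garcia–Stichtenoth tower of Weierstrass semigroups:
`Λ¹ = ℕ₀`, `Λᵐ = q·Λ^{m-1} ∪ {i : i ≥ qᵐ - q^⌊(m+1)/2⌋}` for `m ≥ 2`. -/
def GSsemigroup (q : ℕ) : ℕ → Set ℕ
  | 0 => Set.univ
  | 1 => Set.univ
  | (m + 2) => (fun x => q * x) '' GSsemigroup q (m + 1) ∪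
      {i : ℕ | q ^ (m + 2) - q ^ ((m + 3) / 2) ≤ i}

/-- `c_m = q^m - q^⌊(m+1)/2⌋`, the conductor of `Λ^m`. -/
def gsC (q m : ℕ) : ℕ := q ^ m - q ^ ((m + 1) / 2)

/-- `g_m = (q^⌊(m+1)/2⌋ - 1)(q^⌈(m-1)/2⌉ - 1)`, the genus of `Λ^m`
(note `⌈(m-1)/2⌉ = ⌊m/2⌋` for `m ≥ 1`). -/
def gsG (q m : ℕ) : ℕ := (q ^ ((m + 1) / 2) - 1) * (q ^ (m / 2) - 1)

/-- `A_i = {j : q^{2i-1} - q^i ≤ j ≤ q^{2i-1} - q^{i-1} - 1}`. -/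
def gsA (q i : ℕ) : Set ℕ :=
  {j : ℕ | q ^ (2 * i - 1) - q ^ i ≤ j ∧ j ≤ q ^ (2 * i - 1) - q ^ (i - 1) - 1}

/-- The enumeration `λ` of `Λ^m`: the increasing bijection `ℕ₀ → Λ^m`. -/
noncomputable def gsEnum (q m : ℕ) : ℕ → ℕ := Nat.nth (fun n => n ∈ GSsemigroup q m)

/-- `ν_i = #{j : λ_i - λ_j ∈ Λ^m}` (the subtraction being in `ℤ`,
i.e. `∃ a ∈ Λ^m, λ_j + a = λ_i`). -/
noncomputable def gsNu (q m i : ℕ) : ℕ :=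
  Set.ncard {j : ℕ | ∃ a ∈ GSsemigroup q m, gsEnum q m j + a = gsEnum q m i}

/-- The order (Feng–Rao) bound `δ_i = min {ν_j : j > i}`. -/
noncomputable def gsDelta (q m i : ℕ) : ℕ := sInf (gsNu q m '' {j : ℕ | i < j})

/-- The semigroup floor `⌊k⌋_{Λ^m}`: the largest element of `Λ^m` not exceeding `k`. -/
noncomputable def gsFloor (q m k : ℕ) : ℕ := sSup {x ∈ GSsemigroup q m | x ≤ k}

/-- `λ⁻¹(x)` for `x ∈ Λ^m`: the number of elements of `Λ^m` below `x`. -/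
noncomputable def gsLinv (q m x : ℕ) : ℕ := Set.ncard {y ∈ GSsemigroup q m | y < x}

attribute [local instance] Classical.propDecidable

lemma gs_mem_of_ge (q m : ℕ) (hm : 1 ≤ m) (n : ℕ) (hn : gsC q m ≤ n) :
    n ∈ GSsemigroup q m := by
  match m with
  | 1 => simp [GSsemigroup]
  | (k+2) => exact Or.inr hn

lemma count_add (p : ℕ → Prop) (a : ℕ) (h : ∀ k, a ≤ k → p k) (s : ℕ) :
    Nat.count p (a + s) = Nat.count p a + s := by
  induction s with
  | zero => simp
  | succ n ih =>
    rw [show a + (n+1) = (a+n)+1 by omega, Nat.count_succ, ih,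
      if_pos (h _ (Nat.le_add_right a n))]
    omega

lemma count_mul (q : ℕ) (hq : 2 ≤ q) (m D : ℕ)
    (hD : q * D = gsC q (m+2)) :
    Nat.count (fun n => n ∈ GSsemigroup q (m+2)) (q * D)
      = Nat.count (fun n => n ∈ GSsemigroup q (m+1)) D := by
  have hq0 : 0 < q := by omega
  rw [Nat.count_eq_card_filter_range, Nat.count_eq_card_filter_range]
  have himg : (Finset.range (q*D)).filter (fun n => n ∈ GSsemigroup q (m+2))
      = ((Finset.range D).filter (fun n => n ∈ GSsemigroup q (m+1))).image (fun x => q * x) := by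
    ext n
    simp only [Finset.mem_filter, Finset.mem_image, Finset.mem_range]
    constructor
    · rintro ⟨hlt, hmem⟩
      rcases hmem with ⟨x, hx, hqx⟩ | hge
      · refine ⟨x, ⟨?_, hx⟩, hqx⟩
        have hqx' : q * x = n := hqx
        have : q * x < q * D := by rw [hqx']; exact hlt
        exact lt_of_mul_lt_mul_left this (Nat.zero_le q)
      · exfalso
        have : gsC q (m+2) ≤ n := hge
        omega
    · rintro ⟨x, ⟨hxD, hx⟩, rfl⟩
      exact ⟨(Nat.mul_lt_mul_left hq0).mpr hxD, Or.inl ⟨x, hx, rfl⟩⟩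
  rw [himg, Finset.card_image_of_injective _ (mul_right_injective₀ (by omega : q ≠ 0))]

lemma countc (q : ℕ) (hq : 2 ≤ q) : ∀ m, 1 ≤ m →
    Nat.count (fun n => n ∈ GSsemigroup q m) (gsC q m) = q ^ (m / 2) - 1 := by
  intro m
  induction m using Nat.strong_induction_on with
  | _ m ih =>
    match m with
    | 0 => omega
    | 1 => intro _; simp [gsC]
    | (k+2) =>
      intro _
      have pA : q ^ ((k+1)/2) ≤ q ^ ((k+2)/2) := Nat.pow_le_pow_right (by omega) (by omega)
      have pB : q ^ ((k+2)/2) ≤ q ^ (k+1) := Nat.pow_le_pow_right (by omega) (by omega)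
      have pA1 : 1 ≤ q ^ ((k+1)/2) := Nat.one_le_pow _ _ (by omega)
      set D := q ^ (k+1) - q ^ ((k+1)/2) with hD
      have e1 : q * D = gsC q (k+2) := by
        rw [hD, Nat.mul_sub, gsC, ← pow_succ', ← pow_succ']
        congr 2 <;> omega
      have hc1 : gsC q (k+1) = q ^ (k+1) - q ^ ((k+2)/2) := by
        rw [gsC]
      have e2 : D = gsC q (k+1) + (q ^ ((k+2)/2) - q ^ ((k+1)/2)) := by
        rw [hD, hc1]; omega
      rw [← e1, count_mul q hq k D e1, e2,
        count_add _ _ (fun n hn => gs_mem_of_ge q (k+1) (by omega) n hn),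
        ih (k+1) (by omega) (by omega)]
      omega

/-- for `t ≥ q^⌊m/2⌋ - 1`, `λ(t) = c_m + t - q^⌊m/2⌋ + 1`. -/
theorem stmt7 (q : ℕ) (hq : 2 ≤ q) (m : ℕ) (hm : 1 ≤ m) (t : ℕ)
    (ht : q ^ (m / 2) - 1 ≤ t) :
    gsEnum q m t = gsC q m + (t + 1 - q ^ (m / 2)) := by
  have hpos : 1 ≤ q ^ (m/2) := Nat.one_le_pow _ _ (by omega)
  set s := t + 1 - q ^ (m/2) with hs
  have hcnt : Nat.count (fun n => n ∈ GSsemigroup q m) (gsC q m + s) = t := by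
    rw [count_add _ _ (fun k hk => gs_mem_of_ge q m hm k hk), countc q hq m hm]
    omega
  have h := Nat.nth_count (p := fun n => n ∈ GSsemigroup q m)
      (gs_mem_of_ge q m hm (gsC q m + s) (Nat.le_add_right _ _))
  rw [hcnt] at h
  simpa [gsEnum] using h
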